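/- Let a = √((3−√5)/2), let θ ∈ ℝ, and define the two-qubit state |φ⟩ = a(|01⟩ + |10⟩) + e^{iθ}√(1−2a²)|11⟩ in ℂ² ⊗ ℂ². Take the measurements A₀ = B₀ given by projections Π_{+|0} = |0⟩⟨0|, Π_{−|0} = |1⟩⟨1|, and A₁ = B₁ given by Π_{+|1} = |+⟩⟨+|, Π_{−|1} = I − |+⟩⟨+| where |+⟩ = (1/√(1−a²))(√(1−2a²)|0⟩ − e^{iθ} a |1⟩). Then the behavior p(a,b|x,y) = ⟨φ|(Π_{a|x} ⊗ Π_{b|y})|φ⟩ satisfies the Hardy constraints p(+,+|0,0) = p(+,−|1,0) = p(−,+|0,1) = 0 and achieves Hardy's probability p(+,+|1,1) = (5√5 − 11)/2. -/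

import Mathlib

open Matrix Complex
open scoped Kronecker

noncomputable section

/-- Hardy's amplitude `a = √((3 − √5)/2)`. -/
def aH : ℝ := Real.sqrt ((3 - Real.sqrt 5) / 2)

/-- The phase factor times `√(1 − 2a²)`. -/
def cH (θ : ℝ) : ℂ := Complex.exp (θ * Complex.I) * (Real.sqrt (1 - 2 * aH ^ 2) : ℝ)

/-- Hardy's state `|φ⟩ = a(|01⟩ + |10⟩) + e^{iθ}√(1−2a²)|11⟩` in `ℂ² ⊗ ℂ²`,
given by its coordinates in the computational basis. -/
def phiH (θ : ℝ) : Fin 2 × Fin 2 → ℂ :=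
  fun p => !![0, (aH : ℂ); (aH : ℂ), cH θ] p.1 p.2

/-- The vector `|+⟩ = (1/√(1−a²))(√(1−2a²)|0⟩ − e^{iθ} a |1⟩)`. -/
def plusH (θ : ℝ) : Fin 2 → ℂ :=
  ![(Real.sqrt (1 - 2 * aH ^ 2) : ℂ) / (Real.sqrt (1 - aH ^ 2) : ℂ),
    -(Complex.exp (θ * Complex.I) * (aH : ℂ)) / (Real.sqrt (1 - aH ^ 2) : ℂ)]

/-- The rank-one projection `|+⟩⟨+|`. -/
def projPlusH (θ : ℝ) : Matrix (Fin 2) (Fin 2) ℂ :=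
  vecMulVec (plusH θ) (star (plusH θ))

/-- Hardy's measurements: input `0` is the computational-basis measurement
`Π₊ = |0⟩⟨0|`, `Π₋ = |1⟩⟨1|`; input `1` is `Π₊ = |+⟩⟨+|`, `Π₋ = 1 − |+⟩⟨+|`.
Outcome `true` = `+`, `false` = `−`. -/
def measH (θ : ℝ) : Fin 2 → Bool → Matrix (Fin 2) (Fin 2) ℂ :=
  fun x a =>
    if x = 0 then (if a then !![1, 0; 0, 0] else !![0, 0; 0, 1])
    else (if a then projPlusH θ else 1 - projPlusH θ)

/-- **Hardy's two-qubit realization:** the state `|φ⟩` with the measurements above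
satisfies the three Hardy constraints and attains `p_Hardy = (5√5 − 11)/2`. -/
theorem hardy_two_qubit_realization (θ : ℝ)
    (p : Bool → Bool → Fin 2 → Fin 2 → ℂ)
    (hp : ∀ a b x y,
      p a b x y = star (phiH θ) ⬝ᵥ ((measH θ x a ⊗ₖ measH θ y b) *ᵥ phiH θ)) :
    p true true 0 0 = 0 ∧
    p true false 1 0 = 0 ∧
    p false true 0 1 = 0 ∧
    p true true 1 1 = ((5 * Real.sqrt 5 - 11) / 2 : ℝ) := by
  have h5 : Real.sqrt 5 < 3 := by
    nlinarith [Real.sq_sqrt (by norm_num : (5:ℝ) ≥ 0), Real.sqrt_nonneg 5]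
  have h5' : (2:ℝ) < Real.sqrt 5 := by
    nlinarith [Real.sq_sqrt (by norm_num : (5:ℝ) ≥ 0), Real.sqrt_nonneg 5]
  have ha : aH ^ 2 = (3 - Real.sqrt 5) / 2 := Real.sq_sqrt (by linarith)
  have hb : Real.sqrt (1 - 2 * aH ^ 2) ^ 2 = 1 - 2 * aH ^ 2 :=
    Real.sq_sqrt (by nlinarith)
  have hd : Real.sqrt (1 - aH ^ 2) ^ 2 = 1 - aH ^ 2 := Real.sq_sqrt (by nlinarith)
  have hD : ((Real.sqrt (1 - aH ^ 2) : ℝ) : ℂ) ≠ 0 := by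
    have : (0:ℝ) < Real.sqrt (1 - aH ^ 2) := Real.sqrt_pos.2 (by nlinarith)
    exact_mod_cast this.ne'
  have hinv : ((Real.sqrt (1 - aH ^ 2) : ℝ) : ℂ)⁻¹ * ((Real.sqrt (1 - aH ^ 2) : ℝ) : ℂ) = 1 :=
    inv_mul_cancel₀ hD
  have hE : (starRingEnd ℂ) (Complex.exp (θ * Complex.I)) * Complex.exp (θ * Complex.I) = 1 := by
    rw [← Complex.exp_conj, ← Complex.exp_add]; simp
  have hA := congrArg (Complex.ofReal) ha
  have hB := congrArg (Complex.ofReal) hb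
  have hDD := congrArg (Complex.ofReal) hd
  have hS := congrArg (Complex.ofReal) (Real.sq_sqrt (by norm_num : (0:ℝ) ≤ 5))
  push_cast at hA hB hDD hS
  refine ⟨?_, ?_, ?_, ?_⟩
  · rw [hp]
    simp [measH, phiH, dotProduct, mulVec, Fintype.sum_prod_type, Fin.sum_univ_succ,
      kroneckerMap_apply]
  · rw [hp]
    simp [measH, phiH, projPlusH, plusH, vecMulVec, dotProduct, mulVec, Fintype.sum_prod_type,
      Fin.sum_univ_succ, kroneckerMap_apply, cH]
    field_simp
    linear_combination ((aH:ℂ)^2 * ((Real.sqrt (1 - 2*aH^2):ℝ):ℂ)^2 *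
      ((starRingEnd ℂ) (Complex.exp (θ*Complex.I)) * Complex.exp (θ*Complex.I) - 1)) * hE
  · rw [hp]
    simp [measH, phiH, projPlusH, plusH, vecMulVec, dotProduct, mulVec, Fintype.sum_prod_type,
      Fin.sum_univ_succ, kroneckerMap_apply, cH]
    field_simp
    linear_combination ((aH:ℂ)^2 * ((Real.sqrt (1 - 2*aH^2):ℝ):ℂ)^2 *
      ((starRingEnd ℂ) (Complex.exp (θ*Complex.I)) * Complex.exp (θ*Complex.I) - 1)) * hE
  · rw [hp]
    simp [measH, phiH, projPlusH, plusH, vecMulVec, dotProduct, mulVec, Fintype.sum_prod_type,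
      Fin.sum_univ_succ, kroneckerMap_apply, cH]
    set A : ℂ := ((aH : ℝ) : ℂ) with hAdef
    set B : ℂ := ((Real.sqrt (1 - 2 * aH ^ 2) : ℝ) : ℂ) with hBdef
    set D : ℂ := ((Real.sqrt (1 - aH ^ 2) : ℝ) : ℂ) with hDdef
    set E : ℂ := Complex.exp (θ * Complex.I) with hEdef
    set F : ℂ := (starRingEnd ℂ) (Complex.exp (θ * Complex.I)) with hFdef
    set S : ℂ := ((Real.sqrt 5 : ℝ) : ℂ) with hSdef
    linear_combination
      (A^4*B^2*(D⁻¹)^4*((F*E)^2 - 3*(F*E) + 1)) * hE +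
      ((5*S-11)/2*((D⁻¹*D)^3 + (D⁻¹*D)^2 + (D⁻¹*D) + 1)) * hinv +
      ((D⁻¹)^4*A^4) * hB +
      ((D⁻¹)^4*(-((5*S-11)/2))*(D^2+1-A^2)) * hDD +
      ((D⁻¹)^4*(-2*A^4 + ((7-3*S)/2)*A^2 + (3*S^2+4*S-23)/4)) * hA +
      ((D⁻¹)^4*(-(3*S-5)/8)) * hS
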